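/- Let G = (V,E,w̄) be a directed graph on n vertices in which all edge weights are multiples of 2n, and let φ be any price function. Define w*(e) = w̄_φ(e) + 1 for all e. If P is a shortest s–v path with respect to w* (with s ≠ v), then P is also a shortest s–v path with respect to w̄_φ. -/

import Mathlib

def walkWeight {V : Type*} (w : V → V → ℤ) (l : List V) : ℤ :=
  ((l.zip l.tail).map fun p => w p.1 p.2).sum

lemma walkWeight_cons_cons {V : Type*} (w : V → V → ℤ) (a b : V) (t : List V) :
    walkWeight w (a :: b :: t) = w a b + walkWeight w (b :: t) := by
  simp [walkWeight]

lemma walkWeight_add {V : Type*} (f g : V → V → ℤ) (l : List V) :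
    walkWeight (fun a b => f a b + g a b) l = walkWeight f l + walkWeight g l := by
  unfold walkWeight
  induction (l.zip l.tail) with
  | nil => simp
  | cons h t ih => simp [ih]; ring

lemma walkWeight_one {V : Type*} (l : List V) :
    walkWeight (fun _ _ => (1:ℤ)) l = l.tail.length := by
  unfold walkWeight
  have : ∀ m : List (V × V), (m.map fun _ => (1:ℤ)).sum = m.length := by
    intro m; induction m with
    | nil => simp
    | cons h t ih => simp [ih]; ring
  rw [this, List.length_zip]
  cases l with
  | nil => simp
  | cons a t => simp [Nat.min_def]

lemma walkWeight_tel {V : Type*} (φ : V → ℤ) (a : V) (l : List V) :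
    walkWeight (fun x y => φ x - φ y) (a :: l) = φ a - φ ((a :: l).getLast (by simp)) := by
  induction l generalizing a with
  | nil => simp [walkWeight]
  | cons b t ih =>
    rw [walkWeight_cons_cons, ih b]
    simp

lemma walkWeight_dvd {V : Type*} (w : V → V → ℤ) (d : ℤ) (h : ∀ u v, d ∣ w u v)
    (l : List V) : d ∣ walkWeight w l := by
  unfold walkWeight
  refine List.dvd_sum ?_
  intro x hx
  simp only [List.mem_map] at hx
  obtain ⟨p, _, rfl⟩ := hx
  exact h p.1 p.2

/-- `P` is a shortest simple `u`–`v` path w.r.t. `w` on the graph `E`. -/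
def IsShortestSimplePath {V : Type*} (E : V → V → Prop) (w : V → V → ℤ) (u v : V)
    (P : List V) : Prop :=
  P.Chain' E ∧ P.Nodup ∧ P.head? = some u ∧ P.getLast? = some v ∧
    ∀ Q : List V, Q.Chain' E → Q.Nodup → Q.head? = some u → Q.getLast? = some v →
      walkWeight w P ≤ walkWeight w Q

/-- If all weights of `w̄` are multiples of `2n` and `w*(e) = w̄_φ(e) + 1`, then any
shortest `s`–`v` path w.r.t. `w*` (with `s ≠ v`) is also shortest w.r.t. `w̄_φ`. -/
theorem stmt_8 {V : Type*} [Fintype V] (n : ℕ) (hcard : Fintype.card V = n)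
    (hn : 2 ≤ n) (E : V → V → Prop) (wbar : V → V → ℤ) (φ : V → ℤ)
    (hdvd : ∀ u v : V, ((2 * n : ℕ) : ℤ) ∣ wbar u v)
    (s v : V) (hsv : s ≠ v) (P : List V)
    (hP : IsShortestSimplePath E (fun a b => (wbar a b + φ a - φ b) + 1) s v P) :
    IsShortestSimplePath E (fun a b => wbar a b + φ a - φ b) s v P := by
  obtain ⟨hc, hnd, hh, hl, hmin⟩ := hP
  refine ⟨hc, hnd, hh, hl, ?_⟩
  intro Q hcQ hndQ hhQ hlQ
  have ephi : (fun a b => wbar a b + φ a - φ b) = fun a b => wbar a b + (φ a - φ b) := by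
    funext a b; ring
  have key : ∀ (l : List V), l.head? = some s → l.getLast? = some v →
      walkWeight (fun a b => wbar a b + φ a - φ b) l
        = walkWeight wbar l + (φ s - φ v) ∧ 2 ≤ l.length := by
    intro l hh hl
    match l with
    | [] => simp at hh
    | a :: t =>
      have ha : a = s := by simpa using hh
      subst ha
      have hne : (a :: t) ≠ [] := by simp
      rw [List.getLast?_eq_getLast hne] at hl
      have hv : (a :: t).getLast hne = v := by simpa using hl
      have hlen : 2 ≤ (a :: t).length := by
        match t with
        | [] => exact absurd (by simpa using hv) hsv
        | b :: t' => simp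
      constructor
      · rw [ephi, walkWeight_add, walkWeight_tel φ a t, hv]
      · exact hlen
  obtain ⟨eP, hlenP⟩ := key P hh hl
  obtain ⟨eQ, hlenQ⟩ := key Q hhQ hlQ
  have h1 := hmin Q hcQ hndQ hhQ hlQ
  have estar : (fun a b => (wbar a b + φ a - φ b) + 1)
      = fun a b => (wbar a b + φ a - φ b) + (fun _ _ : V => (1:ℤ)) a b := rfl
  rw [estar, walkWeight_add, walkWeight_add, walkWeight_one, walkWeight_one, eP, eQ] at h1
  rw [eP, eQ]
  have dP := walkWeight_dvd wbar ((2 * n : ℕ) : ℤ) hdvd P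
  have dQ := walkWeight_dvd wbar ((2 * n : ℕ) : ℤ) hdvd Q
  have hQcard : Q.length ≤ n := hcard ▸ hndQ.length_le_card
  by_contra hcon
  push_neg at hcon
  have hdvd2 : ((2 * n : ℕ) : ℤ) ∣ walkWeight wbar P - walkWeight wbar Q :=
    dvd_sub dP dQ
  have hpos : (0:ℤ) < walkWeight wbar P - walkWeight wbar Q := by linarith
  have hge := Int.le_of_dvd hpos hdvd2
  have hPt : (1:ℤ) ≤ P.tail.length := by
    have : 1 ≤ P.tail.length := by cases P <;> simp_all <;> omega
    exact_mod_cast this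
  have hQt : (Q.tail.length : ℤ) ≤ (n:ℤ) - 1 := by
    have : Q.tail.length ≤ n - 1 := by cases Q <;> simp_all <;> omega
    omega
  have hn' : (2:ℤ) ≤ n := by exact_mod_cast hn
  push_cast at hge
  linarith
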